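/- Let η = Σ_I η_I e_I be an element of the Clifford algebra Cl_{r+3} (sum over index subsets I of {1,...,r+3}) which commutes with e_i e_j for all 1 ≤ i < j ≤ r. Then η_I = 0 unless I ⊆ {r+1, r+2, r+3} or {1,...,r} ⊆ I; i.e., the centralizer of spin(r) in Cl_{r+3} is the 16-dimensional span of e_I for I ⊆ {r+1,r+2,r+3} and e_{1,...,r}·e_J for J ⊆ {r+1,r+2,r+3}. -/

import Mathlib

/-- The negative definite quadratic form on `ℝⁿ`. -/
noncomputable def Qneg (n : ℕ) : QuadraticForm ℝ (Fin n → ℝ) :=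
  QuadraticMap.weightedSumSquares ℝ (fun _ : Fin n => (-1 : ℝ))

/-- The Clifford algebra `Cl_n` with `e_j e_k + e_k e_j = -2 δ_{jk}`. -/
noncomputable abbrev Cl (n : ℕ) := CliffordAlgebra (Qneg n)

/-- The standard generators `e_i` of `Cl_n`. -/
noncomputable def gen (n : ℕ) (i : Fin n) : Cl n :=
  CliffordAlgebra.ι (Qneg n) (Pi.single i 1)

/-- For an index set `I = {i₁ < ⋯ < i_s}`, the basis element `e_I = e_{i₁} ⋯ e_{i_s}`. -/
noncomputable def eProd (n : ℕ) (I : Finset (Fin n)) : Cl n :=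
  ((I.sort (· ≤ ·)).map (gen n)).prod


lemma Qneg_apply (n : ℕ) (v : Fin n → ℝ) : Qneg n v = -∑ i, v i * v i := by
  simp [Qneg, QuadraticMap.weightedSumSquares_apply, ← Finset.sum_neg_distrib]

lemma Qneg_single (n : ℕ) (i : Fin n) : Qneg n (Pi.single i 1) = -1 := by
  rw [Qneg_apply]
  rw [Fintype.sum_eq_single i (fun j hj => by simp [Pi.single_apply, Ne.symm hj])]
  simp

lemma gen_mul_self (n : ℕ) (i : Fin n) : gen n i * gen n i = -1 := by
  rw [gen, CliffordAlgebra.ι_sq_scalar, Qneg_single, map_neg, map_one]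

lemma gen_anticomm (n : ℕ) {i j : Fin n} (h : i ≠ j) :
    gen n i * gen n j = -(gen n j * gen n i) := by
  have hpol : QuadraticMap.polar (⇑(Qneg n)) (Pi.single i 1) (Pi.single j 1) = 0 := by
    rw [QuadraticMap.polar, Qneg_apply, Qneg_apply, Qneg_apply]
    have : ∀ k, ((Pi.single i (1:ℝ) + Pi.single j 1 : Fin n → ℝ)) k * ((Pi.single i 1 + Pi.single j 1 : Fin n → ℝ)) k
        = (Pi.single i (1:ℝ) : Fin n → ℝ) k * (Pi.single i (1:ℝ) : Fin n → ℝ) k + (Pi.single j (1:ℝ) : Fin n → ℝ) k * (Pi.single j (1:ℝ) : Fin n → ℝ) k := by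
      intro k
      by_cases hk : k = i
      · subst hk; simp [Pi.single_apply, h.symm]
      · by_cases hk' : k = j
        · subst hk'; simp [Pi.single_apply, h, Ne.symm hk]
        · simp [Pi.single_apply, Ne.symm hk, Ne.symm hk']
    rw [Finset.sum_congr rfl (fun k _ => this k), Finset.sum_add_distrib]
    ring
  have := CliffordAlgebra.ι_mul_ι_add_swap (Q := Qneg n) (Pi.single i (1:ℝ)) (Pi.single j 1)
  rw [hpol, map_zero] at this
  rw [gen, gen]
  have h2 := this
  rw [eq_comm, ← sub_eq_zero] at h2 ⊢
  rw [← h2]; abel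

/-! ### Toggle and signs -/

def tog {n : ℕ} (i : Fin n) (I : Finset (Fin n)) : Finset (Fin n) :=
  if i ∈ I then I.erase i else insert i I

noncomputable def eps (n : ℕ) (i : Fin n) (I : Finset (Fin n)) : ℝ :=
  (if i ∈ I then 1 else -1) * (-1) ^ (I.filter (fun j => j < i)).card

noncomputable def sgn (n : ℕ) (i : Fin n) (I : Finset (Fin n)) : ℝ :=
  (if i ∈ I then -1 else 1) * (-1) ^ (I.filter (fun j => j < i)).card

lemma mem_tog_self {n : ℕ} (i : Fin n) (I : Finset (Fin n)) : i ∈ tog i I ↔ i ∉ I := by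
  unfold tog; split <;> simp_all

lemma mem_tog {n : ℕ} {i j : Fin n} (h : j ≠ i) (I : Finset (Fin n)) :
    j ∈ tog i I ↔ j ∈ I := by
  unfold tog; split <;> simp_all

lemma tog_tog {n : ℕ} (i : Fin n) (I : Finset (Fin n)) : tog i (tog i I) = I := by
  ext k
  by_cases hk : k = i
  · subst hk; rw [mem_tog_self, mem_tog_self]; tauto
  · rw [mem_tog hk, mem_tog hk]

lemma tog_comm {n : ℕ} {i j : Fin n} (h : i ≠ j) (I : Finset (Fin n)) :
    tog i (tog j I) = tog j (tog i I) := by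
  ext k
  by_cases hki : k = i
  · subst hki
    rw [mem_tog_self, mem_tog h, mem_tog h, mem_tog_self]
  · by_cases hkj : k = j
    · subst hkj
      rw [mem_tog hki, mem_tog_self, mem_tog_self, mem_tog hki]
    · rw [mem_tog hki, mem_tog hkj, mem_tog hkj, mem_tog hki]

lemma tog_mem {n : ℕ} {i : Fin n} {I : Finset (Fin n)} (h : i ∈ I) : tog i I = I.erase i := by
  simp [tog, h]

lemma tog_not_mem {n : ℕ} {i : Fin n} {I : Finset (Fin n)} (h : i ∉ I) :
    tog i I = insert i I := by simp [tog, h]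

lemma neg_one_pow_mul_self (k : ℕ) : ((-1:ℝ)) ^ k * (-1) ^ k = 1 := by
  rw [← pow_add]; exact Even.neg_one_pow ⟨k, rfl⟩

lemma filter_tog_self {n : ℕ} (i : Fin n) (I : Finset (Fin n)) :
    ((tog i I).filter (fun j => j < i)) = I.filter (fun j => j < i) := by
  ext k
  simp only [Finset.mem_filter]
  constructor
  · rintro ⟨hk, hlt⟩
    have : k ≠ i := Fin.ne_of_lt hlt
    exact ⟨(mem_tog this I).1 hk, hlt⟩
  · rintro ⟨hk, hlt⟩
    have : k ≠ i := Fin.ne_of_lt hlt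
    exact ⟨(mem_tog this I).2 hk, hlt⟩

lemma eps_tog_self (n : ℕ) (i : Fin n) (I : Finset (Fin n)) :
    eps n i (tog i I) = sgn n i I := by
  unfold eps sgn
  rw [filter_tog_self]
  congr 1
  by_cases h : i ∈ I
  · rw [if_pos h, if_neg (by rw [mem_tog_self]; simpa)]
  · rw [if_neg h, if_pos ((mem_tog_self i I).2 h)]

lemma eps_mul_eps_tog (n : ℕ) (i : Fin n) (I : Finset (Fin n)) :
    eps n i I * eps n i (tog i I) = -1 := by
  unfold eps
  rw [filter_tog_self]
  by_cases h : i ∈ I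
  · rw [if_pos h, if_neg (by rw [mem_tog_self]; simpa)]
    have := neg_one_pow_mul_self (I.filter (fun j => j < i)).card
    nlinarith [this]
  · rw [if_neg h, if_pos ((mem_tog_self i I).2 h)]
    have := neg_one_pow_mul_self (I.filter (fun j => j < i)).card
    nlinarith [this]

lemma sgn_sq (n : ℕ) (i : Fin n) (I : Finset (Fin n)) : sgn n i I * sgn n i I = 1 := by
  unfold sgn
  have := neg_one_pow_mul_self (I.filter (fun j => j < i)).card
  split <;> nlinarith [this]

lemma sgn_ne_zero (n : ℕ) (i : Fin n) (I : Finset (Fin n)) : sgn n i I ≠ 0 := by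
  intro h
  have := sgn_sq n i I
  rw [h] at this; simp at this

lemma neg_one_pow_tog {n : ℕ} (j : Fin n) (S : Finset (Fin n)) :
    ((-1:ℝ)) ^ (tog j S).card = -(-1) ^ S.card := by
  by_cases h : j ∈ S
  · obtain ⟨m, hm⟩ : ∃ m, S.card = m + 1 :=
      ⟨S.card - 1, (Nat.succ_pred_eq_of_pos (Finset.card_pos.2 ⟨j, h⟩)).symm⟩
    rw [tog_mem h, Finset.card_erase_of_mem h, hm]
    simp [pow_succ, Nat.add_sub_cancel]
  · rw [tog_not_mem h, Finset.card_insert_of_notMem h, pow_succ]; ring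

lemma eps_tog_ne {n : ℕ} {i j : Fin n} (h : i ≠ j) (I : Finset (Fin n)) :
    eps n i (tog j I) = (if j < i then (-1:ℝ) else 1) * eps n i I := by
  unfold eps
  simp only [mem_tog h]
  by_cases hji : j < i
  · rw [if_pos hji]
    have hfil : (tog j I).filter (fun k => k < i) = tog j (I.filter (fun k => k < i)) := by
      ext k
      by_cases hk : k = j
      · subst hk
        simp only [Finset.mem_filter, mem_tog_self, hji, and_true]
        all_goals tauto
      · rw [Finset.mem_filter, mem_tog hk, mem_tog hk, Finset.mem_filter]
    rw [hfil, neg_one_pow_tog]; ring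
  · rw [if_neg hji]
    have hfil : (tog j I).filter (fun k => k < i) = I.filter (fun k => k < i) := by
      ext k
      by_cases hk : k = j
      · subst hk
        simp only [Finset.mem_filter, mem_tog_self, hji, and_false]
        all_goals tauto
      · rw [Finset.mem_filter, mem_tog hk, Finset.mem_filter]
    rw [hfil]; ring

/-! ### eProd basics -/

lemma eProd_empty (n : ℕ) : eProd n (∅ : Finset (Fin n)) = 1 := by
  simp [eProd]

lemma eProd_insert_min {n : ℕ} {i : Fin n} {I : Finset (Fin n)}
    (h : ∀ b ∈ I, i < b) : eProd n (insert i I) = gen n i * eProd n I := by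
  have hni : i ∉ I := fun hm => lt_irrefl i (h i hm)
  rw [eProd, Finset.sort_insert (· ≤ ·) (fun b hb => (h b hb).le) hni]
  simp [eProd]

lemma eProd_min_erase {n : ℕ} {I : Finset (Fin n)} (h : I.Nonempty) :
    eProd n I = gen n (I.min' h) * eProd n (I.erase (I.min' h)) := by
  have hmem := I.min'_mem h
  conv_lhs => rw [← Finset.insert_erase hmem]
  exact eProd_insert_min (fun b hb => Finset.min'_lt_of_mem_erase_min' I h hb)

/-- Key multiplication rule: `e_i · e_I = sgn(i,I) e_{I Δ {i}}`. -/
lemma gen_mul_eProd (n : ℕ) (i : Fin n) (I : Finset (Fin n)) :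
    gen n i * eProd n I = sgn n i I • eProd n (tog i I) := by
  induction I using Finset.strongInduction with
  | _ I ih =>
  rcases I.eq_empty_or_nonempty with rfl | hne
  · have h1 : eProd n (insert i (∅ : Finset (Fin n))) = gen n i * eProd n ∅ :=
      eProd_insert_min (by simp)
    rw [eProd_empty, mul_one, tog_not_mem (Finset.notMem_empty i)]
    have h2 : sgn n i (∅ : Finset (Fin n)) = 1 := by simp [sgn]
    rw [h2, one_smul, h1, eProd_empty, mul_one]
  · set m := I.min' hne with hm
    set J := I.erase m with hJ
    have hmin : ∀ b ∈ J, m < b := fun b hb => Finset.min'_lt_of_mem_erase_min' I hne hb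
    have hmI : m ∈ I := I.min'_mem hne
    have hJI : J ⊂ I := Finset.erase_ssubset hmI
    have hIJ : eProd n I = gen n m * eProd n J := eProd_min_erase hne
    rcases lt_trichotomy i m with hlt | heq | hgt
    · -- i < m : i ∉ I, prefix empty
      have hni : i ∉ I := fun hmem => absurd (Finset.min'_le I i hmem) (not_le.2 hlt)
      have hall : ∀ b ∈ I, i < b := fun b hb => lt_of_lt_of_le hlt (Finset.min'_le I b hb)
      have hfil : I.filter (fun j => j < i) = ∅ := by
        apply Finset.filter_false_of_mem
        intro b hb
        exact not_lt.2 (hall b hb).le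
      rw [tog_not_mem hni, ← eProd_insert_min hall]
      have : sgn n i I = 1 := by simp [sgn, hni, hfil]
      rw [this, one_smul]
    · -- i = m
      rw [heq]
      have hfil : I.filter (fun j => j < m) = ∅ := by
        apply Finset.filter_false_of_mem
        intro b hb
        exact not_lt.2 (Finset.min'_le I b hb)
      have hs : sgn n m I = -1 := by simp [sgn, hmI, hfil]
      rw [hIJ, ← mul_assoc, gen_mul_self, hs, tog_mem hmI, ← hJ]
      simp
    · -- m < i
      have hne' : i ≠ m := Fin.ne_of_gt hgt
      have hiIJ : (i ∈ I) ↔ (i ∈ J) := by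
        rw [hJ, Finset.mem_erase]; simp [hne']
      rw [hIJ, ← mul_assoc, gen_anticomm n hne', neg_mul, mul_assoc, ih J hJI]
      have hmJ' : m ∉ tog i J := by
        rw [mem_tog (Fin.ne_of_lt hgt)]
        simp [hJ]
      have hmin' : ∀ b ∈ tog i J, m < b := by
        intro b hb
        by_cases hbi : b = i
        · subst hbi; exact hgt
        · exact hmin b ((mem_tog hbi J).1 hb)
      have htog : tog i I = insert m (tog i J) := by
        by_cases hiI : i ∈ I
        · have hm' : m ∈ I.erase i := Finset.mem_erase.2 ⟨Fin.ne_of_lt hgt, hmI⟩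
          rw [tog_mem hiI, tog_mem (hiIJ.1 hiI), hJ, Finset.erase_right_comm,
            Finset.insert_erase hm']
        · rw [tog_not_mem hiI, tog_not_mem (fun hc => hiI (hiIJ.2 hc)),
            Finset.insert_comm, hJ, Finset.insert_erase hmI]
      rw [htog, eProd_insert_min hmin']
      have hsgn : sgn n i I = -sgn n i J := by
        unfold sgn
        rw [if_congr hiIJ rfl rfl]
        have : I.filter (fun j => j < i) = insert m (J.filter (fun j => j < i)) := by
          conv_lhs => rw [← Finset.insert_erase hmI, ← hJ]
          rw [Finset.filter_insert, if_pos hgt]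
        rw [this, Finset.card_insert_of_notMem (by simp [hJ, Finset.mem_filter])]
        rw [pow_succ]; ring
      rw [hsgn, mul_smul_comm]
      simp

/-! ### Moving a generator through a product -/

lemma gen_mul_listProd (n : ℕ) (i : Fin n) (l : List (Fin n)) (h : i ∉ l) :
    gen n i * (l.map (gen n)).prod =
      ((-1:ℝ) ^ l.length) • ((l.map (gen n)).prod * gen n i) := by
  induction l with
  | nil => simp
  | cons a t ih =>
    have hia : i ≠ a := fun hc => h (hc ▸ (List.mem_cons_self : a ∈ a :: t))
    have hit : i ∉ t := fun hc => h (List.mem_cons_of_mem a hc)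
    rw [List.map_cons, List.prod_cons, ← mul_assoc, gen_anticomm n hia, neg_mul, mul_assoc,
      ih hit, List.length_cons, pow_succ]
    rw [mul_smul_comm, ← neg_smul]
    congr 1
    · ring
    · rw [mul_assoc]

lemma gen_mul_eProd_swap {n : ℕ} {i : Fin n} {I : Finset (Fin n)} (h : i ∉ I) :
    gen n i * eProd n I = ((-1:ℝ) ^ I.card) • (eProd n I * gen n i) := by
  have h' : i ∉ I.sort (· ≤ ·) := fun hc => h ((Finset.mem_sort _).1 hc)
  have := gen_mul_listProd n i (I.sort (· ≤ ·)) h'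
  rwa [Finset.length_sort] at this

lemma eProd_mul_gen_swap {n : ℕ} {i : Fin n} {I : Finset (Fin n)} (h : i ∉ I) :
    eProd n I * gen n i = ((-1:ℝ) ^ I.card) • (gen n i * eProd n I) := by
  rw [gen_mul_eProd_swap h, smul_smul, neg_one_pow_mul_self, one_smul]

/-- Extraction: if `i ∈ I` then `e_I` is a unit multiple of `e_i e_{I\{i}}`. -/
lemma eProd_extract {n : ℕ} {i : Fin n} {I : Finset (Fin n)} (h : i ∈ I) :
    eProd n I = sgn n i (I.erase i) • (gen n i * eProd n (I.erase i)) := by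
  have hL := gen_mul_eProd n i (I.erase i)
  have htog : tog i (I.erase i) = I := by
    rw [tog_not_mem (Finset.notMem_erase i I), Finset.insert_erase h]
  rw [htog] at hL
  rw [hL, smul_smul, sgn_sq, one_smul]

/-! ### Commutation with bivectors -/

lemma bivec_comm_of_not_mem {n : ℕ} {i j : Fin n} {I : Finset (Fin n)}
    (hi : i ∉ I) (hj : j ∉ I) :
    (gen n i * gen n j) * eProd n I = eProd n I * (gen n i * gen n j) := by
  rw [mul_assoc, gen_mul_eProd_swap hj, mul_smul_comm, ← mul_assoc, gen_mul_eProd_swap hi,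
    smul_mul_assoc, smul_smul, neg_one_pow_mul_self, one_smul, mul_assoc]

lemma bivec_comm_of_mem {n : ℕ} {i j : Fin n} {I : Finset (Fin n)}
    (hij : i ≠ j) (hi : i ∈ I) (hj : j ∈ I) :
    (gen n i * gen n j) * eProd n I = eProd n I * (gen n i * gen n j) := by
  set K := I.erase i with hK
  have hjK : j ∈ K := Finset.mem_erase.2 ⟨hij.symm, hj⟩
  set L := K.erase j with hL
  have hiL : i ∉ L := fun hc => (Finset.notMem_erase i I) (Finset.mem_erase.1 hc).2
  have hjL : j ∉ L := Finset.notMem_erase j K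
  have h1 : eProd n I = sgn n i K • (gen n i * eProd n K) := eProd_extract hi
  have h2 : eProd n K = sgn n j L • (gen n j * eProd n L) := eProd_extract hjK
  rw [h1, h2]
  have hcomm := bivec_comm_of_not_mem (I := L) hiL hjL
  have key : (gen n i * gen n j) * (gen n i * (gen n j * eProd n L)) =
      (gen n i * (gen n j * eProd n L)) * (gen n i * gen n j) := by
    have h3 : gen n i * (gen n j * eProd n L) = (gen n i * gen n j) * eProd n L := by
      rw [mul_assoc]
    calc (gen n i * gen n j) * (gen n i * (gen n j * eProd n L))
        = (gen n i * gen n j) * ((gen n i * gen n j) * eProd n L) := by rw [h3]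
      _ = (gen n i * gen n j) * (eProd n L * (gen n i * gen n j)) := by rw [hcomm]
      _ = ((gen n i * gen n j) * eProd n L) * (gen n i * gen n j) := by rw [← mul_assoc]
      _ = (gen n i * (gen n j * eProd n L)) * (gen n i * gen n j) := by
            rw [mul_assoc (gen n i) (gen n j) (eProd n L)]
  simp only [mul_smul_comm, smul_mul_assoc]
  rw [key]

lemma bivec_anticomm {n : ℕ} {i j : Fin n} {I : Finset (Fin n)}
    (hij : i ≠ j) (hi : i ∈ I) (hj : j ∉ I) :
    (gen n i * gen n j) * eProd n I = -(eProd n I * (gen n i * gen n j)) := by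
  set K := I.erase i with hK
  have hiK : i ∉ K := Finset.notMem_erase i I
  have hjK : j ∉ K := fun hc => hj (Finset.mem_erase.1 hc).2
  have h1 : eProd n I = sgn n i K • (gen n i * eProd n K) := eProd_extract hi
  set u := sgn n i K with hu
  set c := ((-1:ℝ)) ^ K.card with hc
  have hcc : c * c = 1 := neg_one_pow_mul_self K.card
  have hLHS : (gen n i * gen n j) * eProd n I = (u * c) • (eProd n K * gen n j) := by
    rw [h1, mul_smul_comm]
    have : gen n i * gen n j * (gen n i * eProd n K) = gen n j * eProd n K := by
      rw [← mul_assoc, mul_assoc (gen n i) (gen n j) (gen n i), gen_anticomm n hij.symm,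
        mul_neg, ← mul_assoc, gen_mul_self]
      simp
    rw [this, gen_mul_eProd_swap hjK, ← hc, smul_smul]
  have hRHS : eProd n I * (gen n i * gen n j) = -((u * c) • (eProd n K * gen n j)) := by
    rw [h1, smul_mul_assoc]
    have hswap : eProd n K * gen n i = c • (gen n i * eProd n K) := by
      rw [eProd_mul_gen_swap hiK, hc]
    have : gen n i * eProd n K * (gen n i * gen n j) = -(c • (eProd n K * gen n j)) := by
      calc gen n i * eProd n K * (gen n i * gen n j)
          = gen n i * (eProd n K * gen n i) * gen n j := by noncomm_ring
        _ = gen n i * (c • (gen n i * eProd n K)) * gen n j := by rw [hswap]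
        _ = c • ((gen n i * gen n i) * eProd n K * gen n j) := by
              rw [mul_smul_comm, smul_mul_assoc]; rw [← mul_assoc]
        _ = -(c • (eProd n K * gen n j)) := by rw [gen_mul_self]; simp [mul_assoc]
    rw [this, smul_neg, smul_smul]
  rw [hLHS, hRHS, neg_neg]

/-! ### A faithful-enough representation -/

noncomputable def cOp (n : ℕ) (i : Fin n) :
    (Finset (Fin n) → ℝ) →ₗ[ℝ] (Finset (Fin n) → ℝ) where
  toFun f := fun I => eps n i I * f (tog i I)
  map_add' f g := by funext I; simp [mul_add]
  map_smul' r f := by funext I; simp [Pi.smul_apply, smul_eq_mul]; ring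

lemma cOp_cOp_same (n : ℕ) (i : Fin n) (f : Finset (Fin n) → ℝ) :
    cOp n i (cOp n i f) = -f := by
  funext I
  simp only [cOp, LinearMap.coe_mk, AddHom.coe_mk, Pi.neg_apply]
  rw [tog_tog, ← mul_assoc, eps_mul_eps_tog]
  ring

lemma cOp_anticomm (n : ℕ) {i j : Fin n} (h : i ≠ j) (f : Finset (Fin n) → ℝ) :
    cOp n i (cOp n j f) = -(cOp n j (cOp n i f)) := by
  funext I
  simp only [cOp, LinearMap.coe_mk, AddHom.coe_mk, Pi.neg_apply]
  rw [tog_comm h.symm]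
  have h1 : eps n j (tog i I) = (if i < j then (-1:ℝ) else 1) * eps n j I := eps_tog_ne h.symm I
  have h2 : eps n i (tog j I) = (if j < i then (-1:ℝ) else 1) * eps n i I := eps_tog_ne h I
  rw [h1, h2]
  rcases h.lt_or_gt with hlt | hlt
  · rw [if_pos hlt, if_neg (asymm hlt)]; ring
  · rw [if_neg (asymm hlt), if_pos hlt]; ring

noncomputable def fmap (n : ℕ) :
    (Fin n → ℝ) →ₗ[ℝ] Module.End ℝ (Finset (Fin n) → ℝ) where
  toFun v := ∑ i, v i • cOp n i
  map_add' v w := by simp [add_smul, Finset.sum_add_distrib]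
  map_smul' r v := by simp [Finset.smul_sum, smul_smul]

lemma cOp_end_mul_same (n : ℕ) (i : Fin n) :
    (cOp n i * cOp n i : Module.End ℝ (Finset (Fin n) → ℝ)) = -1 := by
  exact LinearMap.ext fun f => cOp_cOp_same n i f

lemma cOp_end_anticomm (n : ℕ) {i j : Fin n} (h : i ≠ j) :
    (cOp n i * cOp n j : Module.End ℝ (Finset (Fin n) → ℝ)) = -(cOp n j * cOp n i) := by
  exact LinearMap.ext fun f => cOp_anticomm n h f

lemma fmap_sq (n : ℕ) (v : Fin n → ℝ) :
    fmap n v * fmap n v = algebraMap ℝ (Module.End ℝ (Finset (Fin n) → ℝ)) (Qneg n v) := by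
  set E := Module.End ℝ (Finset (Fin n) → ℝ) with hE
  have expand : fmap n v * fmap n v
      = ∑ i, ∑ j, (v i * v j) • (cOp n i * cOp n j) := by
    show (∑ i, v i • cOp n i) * (∑ j, v j • cOp n j) = _
    rw [Finset.sum_mul_sum]
    exact Finset.sum_congr rfl fun i _ => Finset.sum_congr rfl fun j _ =>
      (smul_mul_smul_comm (v i) (cOp n i) (v j) (cOp n j)).symm ▸ rfl
  have swap : (∑ i, ∑ j, (v i * v j) • (cOp n i * cOp n j))
      = ∑ i, ∑ j, (v i * v j) • (cOp n j * cOp n i) := by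
    rw [Finset.sum_comm]
    exact Finset.sum_congr rfl fun i _ => Finset.sum_congr rfl fun j _ => by rw [mul_comm]
  have hdiag : ∀ i : Fin n,
      (∑ j, ((v i * v j) • (cOp n i * cOp n j) + (v i * v j) • (cOp n j * cOp n i)))
      = (v i * v i) • ((-2 : ℝ) • (1 : E)) := by
    intro i
    rw [Finset.sum_eq_single i]
    · rw [cOp_end_mul_same, ← smul_add]
      congr 1
      have h21 : ((-2:ℝ)) • (1:E) = ((-1:ℝ) + (-1:ℝ)) • (1:E) := by norm_num
      rw [h21, add_smul, neg_one_smul]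
    · intro j _ hji
      rw [cOp_end_anticomm n (Ne.symm hji), smul_neg, neg_add_cancel]
    · intro h; exact absurd (Finset.mem_univ i) h
  have sum2 : fmap n v * fmap n v + fmap n v * fmap n v
      = ((-2) * ∑ i, v i * v i) • (1 : E) := by
    nth_rewrite 1 [expand]
    nth_rewrite 1 [expand]
    nth_rewrite 2 [swap]
    rw [← Finset.sum_add_distrib]
    rw [Finset.sum_congr rfl fun i _ => (Finset.sum_add_distrib).symm]
    rw [Finset.sum_congr rfl fun i _ => hdiag i]
    rw [← Finset.sum_smul, smul_smul]
    congr 1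
    ring
  have rhs : algebraMap ℝ E (Qneg n v) = (Qneg n v) • (1:E) :=
    Algebra.algebraMap_eq_smul_one _
  have h2 : (2:ℝ) • (fmap n v * fmap n v) = (2:ℝ) • (algebraMap ℝ E (Qneg n v)) := by
    rw [two_smul, two_smul, sum2, rhs, Qneg_apply, ← add_smul]
    congr 1
    ring
  have := congrArg (fun z => (2:ℝ)⁻¹ • z) h2
  simpa [smul_smul] using this

noncomputable def phi (n : ℕ) : Cl n →ₐ[ℝ] Module.End ℝ (Finset (Fin n) → ℝ) :=
  CliffordAlgebra.lift (Qneg n) ⟨fmap n, fmap_sq n⟩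

lemma phi_gen (n : ℕ) (i : Fin n) : phi n (gen n i) = cOp n i := by
  rw [phi, gen, CliffordAlgebra.lift_ι_apply]
  have hf : fmap n (Pi.single i 1) = ∑ j, (Pi.single i (1:ℝ) : Fin n → ℝ) j • cOp n j := rfl
  rw [hf, Finset.sum_eq_single i]
  · simp
  · intro j _ hji; simp [Pi.single_apply, Ne.symm hji]
  · intro h; exact absurd (Finset.mem_univ i) h

lemma cOp_single {n : ℕ} {m : Fin n} {S : Finset (Fin n)} (hmS : m ∉ S)
    (h : ∀ b ∈ S, m < b) :
    cOp n m (Pi.single S (1:ℝ)) = Pi.single (insert m S) (1:ℝ) := by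
  funext X
  show eps n m X * (Pi.single S (1:ℝ) : Finset (Fin n) → ℝ) (tog m X)
      = (Pi.single (insert m S) (1:ℝ) : Finset (Fin n) → ℝ) X
  rw [Pi.single_apply, Pi.single_apply]
  by_cases hX : X = insert m S
  · subst hX
    have hmem : m ∈ insert m S := Finset.mem_insert_self m S
    have htg : tog m (insert m S) = S := by
      rw [tog_mem hmem, Finset.erase_insert hmS]
    rw [htg, if_pos rfl, if_pos rfl]
    have hfil : (insert m S).filter (fun j => j < m) = ∅ := by
      apply Finset.filter_false_of_mem
      intro b hb
      rcases Finset.mem_insert.1 hb with rfl | hb'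
      · exact lt_irrefl b
      · exact not_lt.2 (h b hb').le
    rw [eps, if_pos hmem, hfil]
    norm_num
  · have htg : tog m X ≠ S := by
      intro hc
      apply hX
      rw [← tog_tog m X, hc, tog_not_mem hmS]
    rw [if_neg htg, if_neg hX, mul_zero]

lemma phi_eProd_vacuum (n : ℕ) (I : Finset (Fin n)) :
    phi n (eProd n I) (Pi.single (∅ : Finset (Fin n)) (1:ℝ)) = Pi.single I (1:ℝ) := by
  induction I using Finset.strongInduction with
  | _ I ih =>
  rcases I.eq_empty_or_nonempty with rfl | hne
  · rw [eProd_empty, map_one]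
    rfl
  · have hmI := I.min'_mem hne
    have hmin : ∀ b ∈ I.erase (I.min' hne), I.min' hne < b :=
      fun b hb => Finset.min'_lt_of_mem_erase_min' I hne hb
    rw [eProd_min_erase hne, map_mul, Module.End.mul_apply,
      ih _ (Finset.erase_ssubset hmI), phi_gen,
      cOp_single (Finset.notMem_erase _ I) hmin, Finset.insert_erase hmI]

noncomputable def Tvac (n : ℕ) : Cl n →ₗ[ℝ] (Finset (Fin n) → ℝ) :=
  (LinearMap.applyₗ (Pi.single (∅ : Finset (Fin n)) (1:ℝ))).comp (phi n).toLinearMap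

lemma Tvac_eProd (n : ℕ) (I : Finset (Fin n)) : Tvac n (eProd n I) = Pi.single I (1:ℝ) :=
  phi_eProd_vacuum n I

lemma eProd_linearIndependent (n : ℕ) : LinearIndependent ℝ (eProd n) := by
  apply LinearIndependent.of_comp (Tvac n)
  have hcomp : (⇑(Tvac n) ∘ eProd n) = fun I => Pi.single I (1:ℝ) := by
    funext I; exact Tvac_eProd n I
  rw [hcomp]
  rw [Fintype.linearIndependent_iff]
  intro g hg J
  have := congrFun hg J
  simpa [Finset.sum_apply, Pi.single_apply] using this

/-! ### Spanning -/

lemma gen_mul_eProd_mem_span (n : ℕ) (i : Fin n) (I : Finset (Fin n)) :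
    gen n i * eProd n I ∈ Submodule.span ℝ (Set.range (eProd n)) := by
  rw [gen_mul_eProd]
  exact Submodule.smul_mem _ _ (Submodule.subset_span ⟨tog i I, rfl⟩)

lemma ι_eq_sum (n : ℕ) (v : Fin n → ℝ) :
    CliffordAlgebra.ι (Qneg n) v = ∑ i, v i • gen n i := by
  have hv : v = ∑ i, v i • (Pi.single i (1:ℝ) : Fin n → ℝ) := by
    funext j
    rw [Finset.sum_apply]
    rw [Finset.sum_eq_single j]
    · simp
    · intro b _ hbj; simp [Pi.single_apply, hbj]
    · intro h; exact absurd (Finset.mem_univ j) h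
  conv_lhs => rw [hv]
  rw [map_sum]
  exact Finset.sum_congr rfl fun i _ => by rw [map_smul]; rfl

lemma eProd_span_top (n : ℕ) :
    Submodule.span ℝ (Set.range (eProd n)) = ⊤ := by
  set S := Submodule.span ℝ (Set.range (eProd n)) with hS
  have h1 : (1 : Cl n) ∈ S := Submodule.subset_span ⟨∅, eProd_empty n⟩
  have hgen : ∀ (v : Fin n → ℝ), ∀ y ∈ S, CliffordAlgebra.ι (Qneg n) v * y ∈ S := by
    intro v y hy
    induction hy using Submodule.span_induction with
    | mem z hz =>
      obtain ⟨I, rfl⟩ := hz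
      rw [ι_eq_sum, Finset.sum_mul]
      apply Submodule.sum_mem
      intro i _
      rw [smul_mul_assoc]
      exact Submodule.smul_mem _ _ (gen_mul_eProd_mem_span n i I)
    | zero => rw [mul_zero]; exact S.zero_mem
    | add a b _ _ ha hb => rw [mul_add]; exact S.add_mem ha hb
    | smul r a _ ha => rw [mul_smul_comm]; exact S.smul_mem r ha
  have hmul : ∀ x : Cl n, ∀ y ∈ S, x * y ∈ S := by
    intro x
    induction x using CliffordAlgebra.induction with
    | algebraMap r =>
      intro y hy
      rw [Algebra.algebraMap_eq_smul_one, smul_mul_assoc, one_mul]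
      exact S.smul_mem r hy
    | ι v => exact hgen v
    | mul a b ha hb => intro y hy; rw [mul_assoc]; exact ha _ (hb y hy)
    | add a b ha hb => intro y hy; rw [add_mul]; exact S.add_mem (ha y hy) (hb y hy)
  rw [eq_top_iff]
  intro x _
  simpa using hmul x 1 h1

noncomputable def basisCl (n : ℕ) : Module.Basis (Finset (Fin n)) ℝ (Cl n) :=
  Module.Basis.mk (eProd_linearIndependent n) (by rw [eProd_span_top])

lemma basisCl_apply (n : ℕ) (I : Finset (Fin n)) : basisCl n I = eProd n I :=
  Module.Basis.mk_apply _ _ _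


/-! ### Coordinates killed by commutation -/

lemma g_mul_eProd (n : ℕ) (a b : Fin n) (J : Finset (Fin n)) :
    (gen n a * gen n b) * eProd n J
      = (sgn n b J * sgn n a (tog b J)) • eProd n (tog a (tog b J)) := by
  rw [mul_assoc, gen_mul_eProd, mul_smul_comm, gen_mul_eProd, smul_smul, mul_comm]

lemma bivec_anticomm' (n : ℕ) {a b : Fin n} (hab : a ≠ b) {J : Finset (Fin n)}
    (hJ : (a ∈ J) ↔ (b ∉ J)) :
    (gen n a * gen n b) * eProd n J = -(eProd n J * (gen n a * gen n b)) := by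
  by_cases haJ : a ∈ J
  · exact bivec_anticomm hab haJ (hJ.1 haJ)
  · have hbJ : b ∈ J := by by_contra hb; exact haJ (hJ.2 hb)
    have h2 := bivec_anticomm hab.symm hbJ haJ
    have hba : gen n b * gen n a = -(gen n a * gen n b) := gen_anticomm n hab.symm
    rw [hba, neg_mul, mul_neg, neg_neg, neg_eq_iff_eq_neg] at h2
    rw [h2]

lemma repr_eq_zero_of_commute (n : ℕ) (x : Cl n) {a b : Fin n} (hab : a ≠ b)
    {I : Finset (Fin n)} (hmem : (a ∈ I) ↔ (b ∉ I))
    (hc : Commute x (gen n a * gen n b)) :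
    (basisCl n).repr x I = 0 := by
  classical
  set c : Finset (Fin n) → ℝ := fun J => (basisCl n).repr x J with hcdef
  have hτinj : ∀ J K : Finset (Fin n), tog a (tog b J) = tog a (tog b K) → J = K := by
    intro J K h
    have := congrArg (fun S => tog b (tog a S)) h
    simpa [tog_tog] using this
  have hrepr : ∀ K : Finset (Fin n), (basisCl n).repr (eProd n K) = Finsupp.single K 1 :=
    fun K => by rw [← basisCl_apply, Module.Basis.repr_self]
  have hx : x = ∑ J, c J • eProd n J := by
    have h := (Module.Basis.sum_repr (basisCl n) x).symm
    simp only [basisCl_apply] at h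
    exact h
  have hDbad : ∀ J : Finset (Fin n), ((a ∈ J) ↔ (b ∉ J)) →
      eProd n J * (gen n a * gen n b) - (gen n a * gen n b) * eProd n J
        = (-2 * (sgn n b J * sgn n a (tog b J))) • eProd n (tog a (tog b J)) := by
    intro J hJ
    have hanti := bivec_anticomm' n hab hJ
    have h1 : eProd n J * (gen n a * gen n b) = -((gen n a * gen n b) * eProd n J) := by
      rw [hanti, neg_neg]
    rw [h1, g_mul_eProd, sub_eq_add_neg, ← neg_smul, ← add_smul]
    congr 1
    ring
  have hDgood : ∀ J : Finset (Fin n), ¬((a ∈ J) ↔ (b ∉ J)) →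
      eProd n J * (gen n a * gen n b) - (gen n a * gen n b) * eProd n J = 0 := by
    intro J hJ
    rw [not_iff] at hJ
    by_cases haJ : a ∈ J
    · have hbJ : b ∈ J := by by_contra hb; exact (hJ.2 hb) haJ
      rw [bivec_comm_of_mem hab haJ hbJ, sub_self]
    · have hbJ : b ∉ J := hJ.1 haJ
      rw [bivec_comm_of_not_mem haJ hbJ, sub_self]
  have heq : (0:Cl n) = ∑ J, c J •
      (eProd n J * (gen n a * gen n b) - (gen n a * gen n b) * eProd n J) := by
    have h1 : x * (gen n a * gen n b) = ∑ J, c J • (eProd n J * (gen n a * gen n b)) := by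
      conv_lhs => rw [hx]
      rw [Finset.sum_mul]
      exact Finset.sum_congr rfl fun J _ => smul_mul_assoc _ _ _
    have h2 : (gen n a * gen n b) * x = ∑ J, c J • ((gen n a * gen n b) * eProd n J) := by
      conv_lhs => rw [hx]
      rw [Finset.mul_sum]
      exact Finset.sum_congr rfl fun J _ => mul_smul_comm _ _ _
    have h3 : x * (gen n a * gen n b) - (gen n a * gen n b) * x = 0 := sub_eq_zero.2 hc
    rw [h1, h2, ← Finset.sum_sub_distrib] at h3
    rw [← h3]
    exact Finset.sum_congr rfl fun J _ => (smul_sub _ _ _).symm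
  have happ : (((basisCl n).repr (∑ J, c J •
      (eProd n J * (gen n a * gen n b) - (gen n a * gen n b) * eProd n J)))
        (tog a (tog b I))) = 0 := by
    rw [← heq, map_zero]
    rfl
  rw [map_sum, Finsupp.finset_sum_apply] at happ
  have hterm : ∀ J : Finset (Fin n),
      (((basisCl n).repr (c J •
        (eProd n J * (gen n a * gen n b) - (gen n a * gen n b) * eProd n J)))
          (tog a (tog b I)))
      = if J = I then c I * (-2 * (sgn n b I * sgn n a (tog b I))) else 0 := by
    intro J
    by_cases hJI : J = I
    · subst hJI
      rw [if_pos rfl, map_smul, hDbad J hmem, map_smul, hrepr, Finsupp.smul_apply,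
        Finsupp.smul_apply, Finsupp.single_eq_same]
      simp [smul_eq_mul]
    · rw [if_neg hJI, map_smul, Finsupp.smul_apply]
      by_cases hJ : (a ∈ J) ↔ (b ∉ J)
      · rw [hDbad J hJ, map_smul, hrepr, Finsupp.smul_apply,
          Finsupp.single_apply, if_neg (fun hco => hJI (hτinj J I hco))]
        simp
      · rw [hDgood J hJ, map_zero]
        simp
  rw [Finset.sum_congr rfl fun J _ => hterm J, Finset.sum_ite_eq' Finset.univ I] at happ
  rw [if_pos (Finset.mem_univ I)] at happ
  have hs : (-2 * (sgn n b I * sgn n a (tog b I))) ≠ 0 := by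
    apply mul_ne_zero
    · norm_num
    · exact mul_ne_zero (sgn_ne_zero n b I) (sgn_ne_zero n a _)
  exact (mul_eq_zero.1 happ).resolve_right hs
/-- An element `η = Σ_I η_I e_I` of `Cl_{r+3}` commutes with every `e_i e_j`,
`1 ≤ i < j ≤ r`, iff it lies in the 16-dimensional span of the `e_J` with
`J ⊆ {r+1, r+2, r+3}` together with the `e_{1,…,r}·e_J` with `J ⊆ {r+1, r+2, r+3}`. -/
theorem stmt7 (r : ℕ) (x : Cl (r + 3)) :
    let n := r + 3
    let top3 : Finset (Fin n) := Finset.univ.filter fun i => r ≤ (i : ℕ)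
    let firstR : Finset (Fin n) := Finset.univ.filter fun i => (i : ℕ) < r
    (∀ i j : Fin n, (i : ℕ) < r → (j : ℕ) < r → i < j →
        Commute x (gen n i * gen n j)) ↔
      x ∈ Submodule.span ℝ
        {y : Cl n | ∃ J ⊆ top3, y = eProd n J ∨ y = eProd n (firstR ∪ J)} := by
  intro n top3 firstR
  constructor
  · intro hcomm
    have key : ∀ I : Finset (Fin n), (basisCl n).repr x I ≠ 0 →
        eProd n I ∈ {y : Cl n | ∃ J ⊆ top3, y = eProd n J ∨ y = eProd n (firstR ∪ J)} := by
      intro I hI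
      by_cases hsub : ∀ k ∈ I, r ≤ (k : ℕ)
      · exact ⟨I, fun k hk => Finset.mem_filter.2 ⟨Finset.mem_univ k, hsub k hk⟩, Or.inl rfl⟩
      · push_neg at hsub
        obtain ⟨i, hiI, hir⟩ := hsub
        have hfull : ∀ k : Fin n, (k : ℕ) < r → k ∈ I := by
          intro k hkr
          by_contra hkI
          have hki : k ≠ i := fun hc => hkI (hc ▸ hiI)
          have hzero : (basisCl n).repr x I = 0 := by
            rcases lt_or_gt_of_ne hki with hlt | hgt
            · exact repr_eq_zero_of_commute n x (Fin.ne_of_lt hlt)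
                (iff_of_false hkI (not_not_intro hiI)) (hcomm k i hkr hir hlt)
            · exact repr_eq_zero_of_commute n x (Fin.ne_of_lt hgt).symm.symm
                (iff_of_true hiI hkI) (hcomm i k hir hkr hgt)
          exact hI hzero
        refine ⟨I.filter (fun k => r ≤ (k : ℕ)), ?_, Or.inr ?_⟩
        · intro k hk
          exact Finset.mem_filter.2 ⟨Finset.mem_univ k, (Finset.mem_filter.1 hk).2⟩
        · congr 1
          ext k
          constructor
          · intro hk
            rcases lt_or_ge (k : ℕ) r with h | h
            · exact Finset.mem_union_left _ (Finset.mem_filter.2 ⟨Finset.mem_univ k, h⟩)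
            · exact Finset.mem_union_right _ (Finset.mem_filter.2 ⟨hk, h⟩)
          · intro hk
            rcases Finset.mem_union.1 hk with h | h
            · exact hfull k (Finset.mem_filter.1 h).2
            · exact (Finset.mem_filter.1 h).1
    rw [← Module.Basis.sum_repr (basisCl n) x]
    apply Submodule.sum_mem
    intro I _
    by_cases hI : (basisCl n).repr x I = 0
    · rw [hI, zero_smul]; exact Submodule.zero_mem _
    · exact Submodule.smul_mem _ _
        (Submodule.subset_span (by rw [basisCl_apply]; exact key I hI))
  · intro hmem i j hir hjr hij
    have hij' : i ≠ j := Fin.ne_of_lt hij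
    induction hmem using Submodule.span_induction with
    | mem y hy =>
      obtain ⟨J, hJtop, hy'⟩ := hy
      have hiJ : i ∉ J := by
        intro hc
        have := (Finset.mem_filter.1 (hJtop hc)).2
        omega
      have hjJ : j ∉ J := by
        intro hc
        have := (Finset.mem_filter.1 (hJtop hc)).2
        omega
      rcases hy' with rfl | rfl
      · exact (bivec_comm_of_not_mem hiJ hjJ).symm
      · have hiU : i ∈ firstR ∪ J :=
          Finset.mem_union_left _ (Finset.mem_filter.2 ⟨Finset.mem_univ i, hir⟩)
        have hjU : j ∈ firstR ∪ J :=
          Finset.mem_union_left _ (Finset.mem_filter.2 ⟨Finset.mem_univ j, hjr⟩)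
        exact (bivec_comm_of_mem hij' hiU hjU).symm
    | zero => exact Commute.zero_left _
    | add y z _ _ hy hz => exact hy.add_left hz
    | smul t y _ hy => exact hy.smul_left t
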